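/- Let K be a field of characteristic 0 and φ ∈ K(x) a nonconstant rational function with φ' = p/q for coprime p, q ∈ K[x]. Suppose the n-th dynatomic polynomial Φ_n of φ has nonzero discriminant, ∞ is not n-periodic for φ, and Φ_n has leading coefficient ℓ. Then U_n(φ) := (Res(Φ_n, p)/Res(Φ_n, q)) · ℓ^{deg q − deg p} equals the product of the multipliers of all n-cycles of φ. In particular, U_n(φ) = 0 if and only if φ has an n-periodic critical point in ℙ¹(K̄). -/

import Mathlib

noncomputable section
open Polynomial

/-- The Sylvester matrix of two polynomials. -/
def sylvester {R : Type*} [CommRing R] (p q : R[X]) :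
    Matrix (Fin (p.natDegree + q.natDegree)) (Fin (p.natDegree + q.natDegree)) R :=
  fun i j =>
    if (i : ℕ) < q.natDegree then
      (if (i : ℕ) ≤ (j : ℕ) ∧ (j : ℕ) ≤ (i : ℕ) + p.natDegree then
        p.coeff (p.natDegree + (i : ℕ) - (j : ℕ)) else 0)
    else
      (if (i : ℕ) - q.natDegree ≤ (j : ℕ) ∧ (j : ℕ) ≤ (i : ℕ) - q.natDegree + q.natDegree then
        q.coeff (q.natDegree + ((i : ℕ) - q.natDegree) - (j : ℕ)) else 0)

/-- The resultant of two polynomials, as the determinant of their Sylvester matrix. -/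
def resultant {R : Type*} [CommRing R] (p q : R[X]) : R := (_root_.sylvester p q).det

lemma syl_key {L : Type*} [Field L] (N m s : ℕ) (h : L[X]) (hm : h.natDegree ≤ m)
    (hs : s + m < N) (x : L) :
    (∑ j : Fin N, (if s ≤ (j : ℕ) ∧ (j : ℕ) ≤ s + m then h.coeff (m + s - (j : ℕ)) else 0)
        * x ^ (N - 1 - (j : ℕ))) =
      x ^ (N - 1 - s - m) * h.eval x := by
  classical
  rw [Fin.sum_univ_eq_sum_range
    (fun j => (if s ≤ j ∧ j ≤ s + m then h.coeff (m + s - j) else 0) * x ^ (N - 1 - j)) N]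
  have step1 : (∑ j ∈ Finset.range N,
      (if s ≤ j ∧ j ≤ s + m then h.coeff (m + s - j) else 0) * x ^ (N - 1 - j)) =
      ∑ j ∈ Finset.Icc s (s + m), h.coeff (m + s - j) * x ^ (N - 1 - j) := by
    have e1 : (∑ j ∈ Finset.range N,
        (if s ≤ j ∧ j ≤ s + m then h.coeff (m + s - j) else 0) * x ^ (N - 1 - j)) =
        ∑ j ∈ Finset.range N, (if j ∈ Finset.Icc s (s + m) then
          h.coeff (m + s - j) * x ^ (N - 1 - j) else 0) := by
      apply Finset.sum_congr rfl
      intro j hj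
      by_cases hc : s ≤ j ∧ j ≤ s + m
      · rw [if_pos hc, if_pos (Finset.mem_Icc.mpr hc)]
      · rw [if_neg hc, if_neg (fun hmem => hc (Finset.mem_Icc.mp hmem)), zero_mul]
    rw [e1, Finset.sum_ite_mem, Finset.inter_eq_right.mpr]
    intro j hj
    rw [Finset.mem_Icc] at hj
    rw [Finset.mem_range]
    omega
  rw [step1]
  have step2 : (∑ j ∈ Finset.Icc s (s + m), h.coeff (m + s - j) * x ^ (N - 1 - j)) =
      ∑ k ∈ Finset.range (m + 1), h.coeff (m - k) * x ^ (N - 1 - s - k) := by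
    refine Finset.sum_nbij' (fun j => j - s) (fun k => s + k) ?_ ?_ ?_ ?_ ?_
    · intro j hj; rw [Finset.mem_Icc] at hj; rw [Finset.mem_range]; omega
    · intro k hk; rw [Finset.mem_range] at hk; rw [Finset.mem_Icc]; omega
    · intro j hj; rw [Finset.mem_Icc] at hj; omega
    · intro k hk; rw [Finset.mem_range] at hk; omega
    · intro j hj; rw [Finset.mem_Icc] at hj
      congr 2 <;> omega
  rw [step2]
  have step3 : (∑ k ∈ Finset.range (m + 1), h.coeff (m - k) * x ^ (N - 1 - s - k)) =
      ∑ k ∈ Finset.range (m + 1), h.coeff k * x ^ (N - 1 - s - m + k) := by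
    rw [← Finset.sum_range_reflect (fun k => h.coeff k * x ^ (N - 1 - s - m + k)) (m + 1)]
    apply Finset.sum_congr rfl
    intro k hk; rw [Finset.mem_range] at hk
    congr 2 <;> omega
  rw [step3, Polynomial.eval_eq_sum_range' (Nat.lt_succ_of_le hm) x, Finset.mul_sum]
  apply Finset.sum_congr rfl
  intro k hk
  rw [pow_add]; ring



open Matrix in
lemma resultant_map_eq {K L : Type*} [Field K] [Field L] (ψ : K →+* L)
    (F g : K[X]) (ρ : Fin F.natDegree → L) (hinj : Function.Injective ρ)
    (hroot : ∀ k, (F.map ψ).eval (ρ k) = 0) :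
    ψ (_root_.resultant F g) =
      ψ F.leadingCoeff ^ g.natDegree * ∏ k, (g.map ψ).eval (ρ k) := by
  classical
  set S : Matrix (Fin (F.natDegree + g.natDegree)) (Fin (F.natDegree + g.natDegree)) L :=
    (_root_.sylvester F g).map ψ with hSdef
  have hSentry : ∀ i j : Fin (F.natDegree + g.natDegree), S i j =
      if (i : ℕ) < g.natDegree then
        (if (i : ℕ) ≤ (j : ℕ) ∧ (j : ℕ) ≤ (i : ℕ) + F.natDegree then
          (F.map ψ).coeff (F.natDegree + (i : ℕ) - (j : ℕ)) else 0)
      else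
        (if (i : ℕ) - g.natDegree ≤ (j : ℕ) ∧
            (j : ℕ) ≤ (i : ℕ) - g.natDegree + g.natDegree then
          (g.map ψ).coeff (g.natDegree + ((i : ℕ) - g.natDegree) - (j : ℕ)) else 0) := by
    intro i j
    show ψ (_root_.sylvester F g i j) = _
    rw [_root_.sylvester]
    split_ifs with h1 h2 h3 <;> simp [Polynomial.coeff_map]
  set ρ' : ℕ → L := fun t => if h : t < F.natDegree then ρ ⟨t, h⟩ else 0 with hρ'def
  have hρ'k : ∀ k : Fin F.natDegree, ρ' (k : ℕ) = ρ k := by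
    intro k
    rw [hρ'def]
    dsimp only
    rw [dif_pos k.isLt]
  set V : Matrix (Fin (F.natDegree + g.natDegree)) (Fin (F.natDegree + g.natDegree)) L :=
    fun i j =>
      if (j : ℕ) < g.natDegree then (if (i : ℕ) = (j : ℕ) then 1 else 0)
      else ρ' ((j : ℕ) - g.natDegree) ^ (F.natDegree + g.natDegree - 1 - (i : ℕ))
    with hVdef
  set σ : Fin g.natDegree ⊕ Fin F.natDegree ≃ Fin (F.natDegree + g.natDegree) :=
    finSumFinEquiv.trans (finCongr (by omega)) with hσdef
  have hσl : ∀ iE : Fin g.natDegree, ((σ (Sum.inl iE)) : ℕ) = (iE : ℕ) := by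
    intro iE; simp [hσdef]
  have hσr : ∀ r : Fin F.natDegree, ((σ (Sum.inr r)) : ℕ) = g.natDegree + (r : ℕ) := by
    intro r; simp [hσdef]; omega
  have hcolV : ∀ (i' j : Fin (F.natDegree + g.natDegree)), (j : ℕ) < g.natDegree →
      V i' j = if i' = j then 1 else 0 := by
    intro i' j hj
    rw [hVdef]
    dsimp only
    rw [if_pos hj]
    by_cases hc : (i' : ℕ) = (j : ℕ)
    · rw [if_pos hc, if_pos (Fin.val_injective hc)]
    · rw [if_neg hc, if_neg (fun hh => hc (congrArg Fin.val hh))]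
  have hcol : ∀ (i j : Fin (F.natDegree + g.natDegree)), (j : ℕ) < g.natDegree →
      (S * V) i j = S i j := by
    intro i j hj
    rw [Matrix.mul_apply]
    have hterm : ∀ i' : Fin (F.natDegree + g.natDegree),
        S i i' * V i' j = if i' = j then S i i' else 0 := by
      intro i'
      rw [hcolV i' j hj]
      by_cases hc : i' = j
      · rw [if_pos hc, if_pos hc, mul_one]
      · rw [if_neg hc, if_neg hc, mul_zero]
    simp only [hterm]
    rw [Finset.sum_ite_eq' Finset.univ j (fun i' => S i i')]
    rw [if_pos (Finset.mem_univ j)]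
  have hcolr : ∀ (i : Fin (F.natDegree + g.natDegree)) (k : Fin F.natDegree),
      (S * V) i (σ (Sum.inr k)) =
        (if (i : ℕ) < g.natDegree then 0
         else ρ k ^ (F.natDegree - 1 - ((i : ℕ) - g.natDegree)) * (g.map ψ).eval (ρ k)) := by
    intro i k
    have hjv : ((σ (Sum.inr k)) : ℕ) = g.natDegree + (k : ℕ) := hσr k
    have hVval : ∀ i' : Fin (F.natDegree + g.natDegree),
        V i' (σ (Sum.inr k)) = ρ k ^ (F.natDegree + g.natDegree - 1 - (i' : ℕ)) := by
      intro i'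
      rw [hVdef]
      dsimp only
      rw [if_neg (by omega)]
      have hx : ((σ (Sum.inr k)) : ℕ) - g.natDegree = (k : ℕ) := by omega
      rw [hx, hρ'k]
    rw [Matrix.mul_apply]
    simp only [hVval, hSentry]
    by_cases hie : (i : ℕ) < g.natDegree
    · rw [if_pos hie]
      simp only [if_pos hie]
      have hkey := syl_key (F.natDegree + g.natDegree) F.natDegree (i : ℕ) (F.map ψ)
        Polynomial.natDegree_map_le (by omega) (ρ k)
      rw [hkey, hroot k, mul_zero]
    · rw [if_neg hie]
      simp only [if_neg hie]
      have hs2 : ((i : ℕ) - g.natDegree) + g.natDegree < F.natDegree + g.natDegree := by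
        have := i.isLt; omega
      have hkey := syl_key (F.natDegree + g.natDegree) g.natDegree ((i : ℕ) - g.natDegree)
        (g.map ψ) Polynomial.natDegree_map_le hs2 (ρ k)
      rw [hkey]
      have hexp : F.natDegree + g.natDegree - 1 - ((i : ℕ) - g.natDegree) - g.natDegree =
          F.natDegree - 1 - ((i : ℕ) - g.natDegree) := by omega
      rw [hexp]
  set A : Matrix (Fin g.natDegree) (Fin g.natDegree) L :=
    fun i j => S (σ (Sum.inl i)) (σ (Sum.inl j)) with hA
  set B : Matrix (Fin F.natDegree) (Fin g.natDegree) L :=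
    fun r j => S (σ (Sum.inr r)) (σ (Sum.inl j)) with hB
  set W : Matrix (Fin F.natDegree) (Fin F.natDegree) L :=
    fun r k => ρ k ^ (F.natDegree - 1 - (r : ℕ)) with hW
  set C : Matrix (Fin F.natDegree) (Fin F.natDegree) L :=
    fun r k => ρ k ^ (F.natDegree - 1 - (r : ℕ)) * (g.map ψ).eval (ρ k) with hC
  set Vt : Matrix (Fin g.natDegree) (Fin F.natDegree) L :=
    fun i k => ρ k ^ (F.natDegree + g.natDegree - 1 - (i : ℕ)) with hVt
  have hSV : (S * V).submatrix σ σ = Matrix.fromBlocks A 0 B C := by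
    ext x y
    cases x with
    | inl iE =>
      cases y with
      | inl jE =>
        show (S * V) (σ (Sum.inl iE)) (σ (Sum.inl jE)) = A iE jE
        rw [hcol _ _ (by rw [hσl jE]; exact jE.isLt)]
      | inr k =>
        show (S * V) (σ (Sum.inl iE)) (σ (Sum.inr k)) =
          (0 : Matrix (Fin g.natDegree) (Fin F.natDegree) L) iE k
        rw [hcolr, if_pos (by rw [hσl iE]; exact iE.isLt)]
        rfl
    | inr r =>
      cases y with
      | inl jE =>
        show (S * V) (σ (Sum.inr r)) (σ (Sum.inl jE)) = B r jE
        rw [hcol _ _ (by rw [hσl jE]; exact jE.isLt)]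
      | inr k =>
        show (S * V) (σ (Sum.inr r)) (σ (Sum.inr k)) =
          ρ k ^ (F.natDegree - 1 - (r : ℕ)) * (g.map ψ).eval (ρ k)
        rw [hcolr, if_neg (by rw [hσr r]; omega)]
        have hx : ((σ (Sum.inr r)) : ℕ) - g.natDegree = (r : ℕ) := by rw [hσr r]; omega
        rw [hx]
  have hV : V.submatrix σ σ = Matrix.fromBlocks 1 Vt 0 W := by
    ext x y
    cases x with
    | inl iE =>
      cases y with
      | inl jE =>
        show V (σ (Sum.inl iE)) (σ (Sum.inl jE)) = (1 : Matrix (Fin g.natDegree) (Fin g.natDegree) L) iE jE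
        rw [hcolV _ _ (by rw [hσl jE]; exact jE.isLt), Matrix.one_apply]
        by_cases hc : iE = jE
        · rw [if_pos (congrArg (fun z => σ (Sum.inl z)) hc), if_pos hc]
        · rw [if_neg (fun hh => hc (Sum.inl_injective (σ.injective hh))), if_neg hc]
      | inr k =>
        show V (σ (Sum.inl iE)) (σ (Sum.inr k)) =
          ρ k ^ (F.natDegree + g.natDegree - 1 - (iE : ℕ))
        rw [hVdef]
        dsimp only
        rw [if_neg (by rw [hσr k]; omega)]
        have hx : ((σ (Sum.inr k)) : ℕ) - g.natDegree = (k : ℕ) := by rw [hσr k]; omega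
        rw [hx, hρ'k, hσl iE]
    | inr r =>
      cases y with
      | inl jE =>
        show V (σ (Sum.inr r)) (σ (Sum.inl jE)) =
          (0 : Matrix (Fin F.natDegree) (Fin g.natDegree) L) r jE
        rw [hcolV _ _ (by rw [hσl jE]; exact jE.isLt),
          if_neg (fun hh => Sum.inr_ne_inl (σ.injective hh))]
        rfl
      | inr k =>
        show V (σ (Sum.inr r)) (σ (Sum.inr k)) = ρ k ^ (F.natDegree - 1 - (r : ℕ))
        rw [hVdef]
        dsimp only
        rw [if_neg (by rw [hσr k]; omega)]
        have hx : ((σ (Sum.inr k)) : ℕ) - g.natDegree = (k : ℕ) := by rw [hσr k]; omega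
        have hexp : F.natDegree + g.natDegree - 1 - ((σ (Sum.inr r)) : ℕ) =
            F.natDegree - 1 - (r : ℕ) := by
          rw [hσr r]
          have := r.isLt
          omega
        rw [hx, hρ'k, hexp]
  have hdetA : A.det = ψ F.leadingCoeff ^ g.natDegree := by
    have htri : A.BlockTriangular id := by
      intro i j hij
      have hij' : (j : ℕ) < (i : ℕ) := hij
      rw [hA]
      dsimp only
      rw [hSentry, if_pos (by rw [hσl i]; exact i.isLt),
        if_neg (by rw [hσl i, hσl j]; omega)]
    rw [Matrix.det_of_upperTriangular htri]
    have hdiag : ∀ i : Fin g.natDegree, A i i = ψ F.leadingCoeff := by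
      intro i
      rw [hA]
      dsimp only
      rw [hSentry, if_pos (by rw [hσl i]; exact i.isLt),
        if_pos (by rw [hσl i]; omega)]
      rw [hσl i]
      have hh : F.natDegree + (i : ℕ) - (i : ℕ) = F.natDegree := by omega
      rw [hh, Polynomial.coeff_map]
      rfl
    simp only [hdiag]
    rw [Finset.prod_const, Finset.card_univ, Fintype.card_fin]
  have hdetC : C.det = (∏ k, (g.map ψ).eval (ρ k)) * W.det := by
    have hCW : C = W * Matrix.diagonal (fun k => (g.map ψ).eval (ρ k)) := by
      ext r k
      rw [Matrix.mul_diagonal]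
    rw [hCW, Matrix.det_mul, Matrix.det_diagonal]
    ring
  have hdetWne : W.det ≠ 0 := by
    have hWeq : W = ((Matrix.vandermonde ρ)ᵀ).submatrix
        (⇑(Fin.revPerm : Equiv.Perm (Fin F.natDegree))) id := by
      ext r k
      show ρ k ^ (F.natDegree - 1 - (r : ℕ)) = Matrix.vandermonde ρ k (Fin.rev r)
      rw [Matrix.vandermonde]
      congr 1
      rw [Fin.val_rev]
      omega
    rw [hWeq, Matrix.det_permute, Matrix.det_transpose]
    apply mul_ne_zero
    · rcases Int.units_eq_one_or
        (Equiv.Perm.sign (Fin.revPerm : Equiv.Perm (Fin F.natDegree))) with h1 | h1 <;>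
        rw [h1] <;> simp
    · rw [Matrix.det_vandermonde_ne_zero_iff]
      exact hinj
  have hdetV : V.det = W.det := by
    rw [← Matrix.det_submatrix_equiv_self σ V, hV, Matrix.det_fromBlocks_zero₂₁, Matrix.det_one,
      one_mul]
  have hmain : S.det * W.det =
      (ψ F.leadingCoeff ^ g.natDegree * ∏ k, (g.map ψ).eval (ρ k)) * W.det := by
    calc S.det * W.det = S.det * V.det := by rw [hdetV]
    _ = (S * V).det := (Matrix.det_mul S V).symm
    _ = ((S * V).submatrix σ σ).det := (Matrix.det_submatrix_equiv_self σ (S * V)).symm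
    _ = (Matrix.fromBlocks A 0 B C).det := by rw [hSV]
    _ = A.det * C.det := Matrix.det_fromBlocks_zero₁₂ A B C
    _ = (ψ F.leadingCoeff ^ g.natDegree * ∏ k, (g.map ψ).eval (ρ k)) * W.det := by
        rw [hdetA, hdetC]; ring
  have hfin := mul_right_cancel₀ hdetWne hmain
  rw [_root_.resultant, RingHom.map_det]
  exact hfin


/-- Let `φ = P/Q` be a nonconstant rational function over a field `K` of characteristic
zero, with derivative `φ' = p/q` in lowest terms, and let `Φ` be the `n`-th dynatomic
polynomial of `φ`, assumed to have nonzero discriminant (i.e. separable over `K̄`) and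
such that `∞` is not `n`-periodic, so that the roots of `Φ` in `K̄` are exactly the
points of exact period `n` of `φ` (with orbits avoiding the poles of `φ`). Then
`U_n(φ) := (Res(Φ,p)/Res(Φ,q))·ℓ^{deg q − deg p}` is the product of the multipliers of
all `n`-cycles of `φ`, and `U_n(φ) = 0` iff `φ` has an `n`-periodic critical point. -/
theorem stmt_15 (K : Type*) [Field K] [CharZero K]
    (P Q : K[X]) (hPQ : IsCoprime P Q) (hnc : 1 ≤ max P.natDegree Q.natDegree)
    (p q : K[X]) (hpq : IsCoprime p q) (hq0 : q ≠ 0)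
    (hderiv : p * Q^2 = q * (derivative P * Q - P * derivative Q))
    (n : ℕ) (hn : 1 ≤ n)
    (Φ : K[X]) (hΦ0 : Φ ≠ 0) (ℓ : K) (hl : Φ.leadingCoeff = ℓ)
    (hsep : Squarefree (Φ.map (algebraMap K (AlgebraicClosure K))))
    (f : AlgebraicClosure K → AlgebraicClosure K)
    (hf : ∀ x, f x = (P.map (algebraMap K (AlgebraicClosure K))).eval x /
      (Q.map (algebraMap K (AlgebraicClosure K))).eval x)
    (hroots : ∀ β : AlgebraicClosure K,
      (Φ.map (algebraMap K (AlgebraicClosure K))).eval β = 0 ↔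
        ((∀ i : ℕ, (Q.map (algebraMap K (AlgebraicClosure K))).eval (f^[i] β) ≠ 0) ∧
          f^[n] β = β ∧ ∀ m : ℕ, 0 < m → m < n → f^[m] β ≠ β))
    (U : K)
    (hU : U = _root_.resultant Φ p / _root_.resultant Φ q * ℓ ^ ((q.natDegree : ℤ) - (p.natDegree : ℤ))) :
    (∀ R : Finset (AlgebraicClosure K),
      (∀ β ∈ R, (Φ.map (algebraMap K (AlgebraicClosure K))).eval β = 0) →
      (∀ β ∈ R, ∀ γ ∈ R, (∃ i : ℕ, i < n ∧ f^[i] β = γ) → β = γ) →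
      (∀ γ : AlgebraicClosure K, (Φ.map (algebraMap K (AlgebraicClosure K))).eval γ = 0 →
        ∃ β ∈ R, ∃ i : ℕ, i < n ∧ f^[i] β = γ) →
      algebraMap K (AlgebraicClosure K) U =
        ∏ β ∈ R, ∏ i ∈ Finset.range n,
          ((p.map (algebraMap K (AlgebraicClosure K))).eval (f^[i+1] β) /
           (q.map (algebraMap K (AlgebraicClosure K))).eval (f^[i+1] β))) ∧
    (U = 0 ↔ ∃ β : AlgebraicClosure K,
      (Φ.map (algebraMap K (AlgebraicClosure K))).eval β = 0 ∧
      (p.map (algebraMap K (AlgebraicClosure K))).eval β = 0) := by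
  classical
  set ψ := algebraMap K (AlgebraicClosure K) with hψdef
  set Φb := Φ.map ψ with hΦbdef
  set pb := p.map ψ with hpbdef
  set qb := q.map ψ with hqbdef
  set Qb := Q.map ψ with hQbdef
  have hψinj : Function.Injective ψ := RingHom.injective ψ
  have hΦb0 : Φb ≠ 0 := Polynomial.map_ne_zero hΦ0
  have hlne : ℓ ≠ 0 := by rw [← hl]; exact Polynomial.leadingCoeff_ne_zero.mpr hΦ0
  have hqQ : q ∣ Q ^ 2 := (hpq.symm).dvd_of_dvd_mul_left ⟨_, hderiv⟩
  have hsepb : Φb.Separable := PerfectField.separable_iff_squarefree.mpr hsep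
  have hnodup : Φb.roots.Nodup := Polynomial.nodup_roots hsepb
  have hcard : Multiset.card Φb.roots = Φ.natDegree := by
    have hs : Φb.Splits := IsAlgClosed.splits Φb
    rw [Polynomial.splits_iff_card_roots.mp hs, hΦbdef, Polynomial.natDegree_map]
  set lst := Φb.roots.toList with hlstdef
  have hlen : lst.length = Φ.natDegree := by
    rw [hlstdef, Multiset.length_toList, hcard]
  set ρ : Fin Φ.natDegree → AlgebraicClosure K := fun k => lst.get (Fin.cast hlen.symm k) with hρdef
  have hlstnodup : lst.Nodup := by
    rw [← Multiset.coe_nodup, hlstdef, Multiset.coe_toList]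
    exact hnodup
  have hinj : Function.Injective ρ := by
    apply Function.Injective.comp (List.nodup_iff_injective_get.mp hlstnodup)
    exact Fin.cast_injective hlen.symm
  have hmemρ : ∀ k, ρ k ∈ Φb.roots := by
    intro k
    have hm : lst.get (Fin.cast hlen.symm k) ∈ lst := List.get_mem lst _
    rw [hρdef]
    dsimp only
    rw [← Multiset.mem_toList]
    exact hm
  have hval : ∀ k, Φb.eval (ρ k) = 0 := by
    intro k
    exact (Polynomial.mem_roots hΦb0).mp (hmemρ k)
  have hsurjρ : ∀ γ, Φb.eval γ = 0 → ∃ k, ρ k = γ := by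
    intro γ hγ
    have hγl : γ ∈ lst := by
      rw [hlstdef, Multiset.mem_toList]
      exact (Polynomial.mem_roots hΦb0).mpr hγ
    obtain ⟨i, hi⟩ := List.mem_iff_get.mp hγl
    refine ⟨Fin.cast hlen i, ?_⟩
    rw [hρdef]
    simpa using hi
  -- q does not vanish at roots
  have hQroot : ∀ γ, Φb.eval γ = 0 → qb.eval γ ≠ 0 := by
    intro γ hγ hq0'
    obtain ⟨hQi, -, -⟩ := (hroots γ).mp hγ
    have hQγ : Qb.eval γ ≠ 0 := by simpa using hQi 0
    obtain ⟨c, hc⟩ := hqQ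
    have hmap : Qb ^ 2 = qb * (c.map ψ) := by
      rw [hQbdef, hqbdef, ← Polynomial.map_pow, hc, Polynomial.map_mul]
    have hev := congrArg (Polynomial.eval γ) hmap
    rw [Polynomial.eval_pow, Polynomial.eval_mul, hq0', zero_mul] at hev
    exact hQγ (sq_eq_zero_iff.mp hev)
  -- orbit lemmas
  have horbroot : ∀ β, Φb.eval β = 0 → ∀ j, Φb.eval (f^[j] β) = 0 := by
    intro β hβ j
    obtain ⟨hQi, hn', hex⟩ := (hroots β).mp hβ
    have hper : Function.IsPeriodicPt f n β := hn'
    have hmult : ∀ c : ℕ, f^[n * c] β = β := fun c => hper.mul_const c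
    apply (hroots _).mpr
    refine ⟨?_, ?_, ?_⟩
    · intro i
      rw [← Function.iterate_add_apply]
      exact hQi (i + j)
    · rw [← Function.iterate_add_apply, Nat.add_comm, Function.iterate_add_apply, hn']
    · intro m hm0 hmn hcon
      have hjle : j ≤ n * j := Nat.le_mul_of_pos_left j (by omega)
      have hs : (n * j - j) + j = n * j := by omega
      have h6 : f^[n * j - j] (f^[j] β) = β := by
        rw [← Function.iterate_add_apply, hs]
        exact hmult j
      have h7 : f^[m] β = β := by
        calc f^[m] β = f^[m] (f^[n * j - j] (f^[j] β)) := by rw [h6]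
        _ = f^[n * j - j] (f^[m] (f^[j] β)) := by
            rw [← Function.iterate_add_apply, Nat.add_comm, Function.iterate_add_apply]
        _ = f^[n * j - j] (f^[j] β) := by rw [hcon]
        _ = β := h6
      exact hex m hm0 hmn h7
  have horbinj : ∀ β, Φb.eval β = 0 → ∀ a b : ℕ, 0 < a → a ≤ n → 0 < b → b ≤ n →
      f^[a] β = f^[b] β → a = b := by
    intro β hβ a b ha0 han hb0 hbn hab
    obtain ⟨-, hn', hex⟩ := (hroots β).mp hβ
    by_contra hne
    rcases Nat.lt_or_ge a b with hlt | hge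
    · have h1 : f^[(n - b) + a] β = β := by
        rw [Function.iterate_add_apply, hab, ← Function.iterate_add_apply]
        have hx : n - b + b = n := by omega
        rw [hx, hn']
      exact hex (n - b + a) (by omega) (by omega) h1
    · have hlt : b < a := by omega
      have h1 : f^[(n - a) + b] β = β := by
        rw [Function.iterate_add_apply, ← hab, ← Function.iterate_add_apply]
        have hx : n - a + a = n := by omega
        rw [hx, hn']
      exact hex (n - a + b) (by omega) (by omega) h1
  -- resultant values
  have h1 := resultant_map_eq ψ Φ p ρ hinj hval
  have h2 := resultant_map_eq ψ Φ q ρ hinj hval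
  rw [hl] at h1 h2
  have hPq0 : (∏ k, qb.eval (ρ k)) ≠ 0 :=
    Finset.prod_ne_zero_iff.mpr fun k _ => hQroot _ (hval k)
  have hcne : ψ ℓ ≠ 0 := fun h => hlne (hψinj (by rw [h, map_zero]))
  have hUim : ψ U = ∏ k, (pb.eval (ρ k) / qb.eval (ρ k)) := by
    rw [hU, map_mul, map_div₀, map_zpow₀, h1, h2, Finset.prod_div_distrib,
      zpow_sub₀ hcne, zpow_natCast, zpow_natCast]
    rw [← hpbdef, ← hqbdef]
    field_simp
  constructor
  · intro R hR1 hR2 hR3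
    rw [hUim, ← Finset.prod_product']
    have hroot_pair : ∀ a : AlgebraicClosure K × ℕ, a ∈ R ×ˢ Finset.range n →
        Φb.eval (f^[a.2 + 1] a.1) = 0 := by
      intro a ha
      obtain ⟨haR, -⟩ := Finset.mem_product.mp ha
      exact horbroot a.1 (hR1 a.1 haR) (a.2 + 1)
    symm
    refine Finset.prod_bij (fun a ha => Classical.choose (hsurjρ _ (hroot_pair a ha)))
      (fun a ha => Finset.mem_univ _) ?_ ?_ ?_
    case refine_3 =>
      intro a ha
      have hspec := Classical.choose_spec (hsurjρ _ (hroot_pair a ha))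
      rw [hspec]
    case refine_1 =>
      intro a ha b hb heq
      have hspa := Classical.choose_spec (hsurjρ _ (hroot_pair a ha))
      have hspb := Classical.choose_spec (hsurjρ _ (hroot_pair b hb))
      have heq2 : f^[a.2 + 1] a.1 = f^[b.2 + 1] b.1 := by
        rw [← hspa, ← hspb, heq]
      obtain ⟨haR, han⟩ := Finset.mem_product.mp ha
      obtain ⟨hbR, hbn⟩ := Finset.mem_product.mp hb
      rw [Finset.mem_range] at han hbn
      have hra := hR1 a.1 haR
      have hrb := hR1 b.1 hbR
      obtain ⟨-, hn1, -⟩ := (hroots a.1).mp hra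
      obtain ⟨-, hn2, -⟩ := (hroots b.1).mp hrb
      have h3 : f^[(n - (b.2 + 1)) + (a.2 + 1)] a.1 = b.1 := by
        rw [Function.iterate_add_apply, heq2, ← Function.iterate_add_apply]
        have hx : n - (b.2 + 1) + (b.2 + 1) = n := by omega
        rw [hx, hn2]
      have h4 : f^[((n - (b.2 + 1)) + (a.2 + 1)) % n] a.1 = b.1 := by
        rw [Function.IsPeriodicPt.iterate_mod_apply hn1, h3]
      have hab : a.1 = b.1 :=
        hR2 a.1 haR b.1 hbR ⟨_, Nat.mod_lt _ (by omega), h4⟩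
      have heq3 : f^[a.2 + 1] a.1 = f^[b.2 + 1] a.1 := by rw [heq2, hab]
      have := horbinj a.1 hra (a.2 + 1) (b.2 + 1) (by omega) (by omega) (by omega) (by omega) heq3
      exact Prod.ext hab (by omega)
    case refine_2 =>
      intro k _
      obtain ⟨β, hβR, i, hi, hfi⟩ := hR3 (ρ k) (hval k)
      obtain ⟨-, hnβ, -⟩ := (hroots β).mp (hR1 β hβR)
      have hkey : ∃ i' : ℕ, i' < n ∧ f^[i' + 1] β = ρ k := by
        by_cases hi0 : i = 0
        · refine ⟨n - 1, by omega, ?_⟩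
          have hx : n - 1 + 1 = n := by omega
          rw [hx, hnβ]
          rw [hi0] at hfi
          simpa using hfi
        · refine ⟨i - 1, by omega, ?_⟩
          have hx : i - 1 + 1 = i := by omega
          rw [hx]
          exact hfi
      obtain ⟨i', hi'n, hfi'⟩ := hkey
      have ha : (β, i') ∈ R ×ˢ Finset.range n :=
        Finset.mem_product.mpr ⟨hβR, Finset.mem_range.mpr hi'n⟩
      refine ⟨(β, i'), ha, ?_⟩
      have hspec := Classical.choose_spec (hsurjρ _ (hroot_pair (β, i') ha))
      dsimp only
      apply hinj
      rw [hspec]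
      exact hfi'
  · constructor
    · intro hU0
      have hz : ψ U = 0 := by rw [hU0, map_zero]
      rw [hUim] at hz
      obtain ⟨k, -, hk0⟩ := Finset.prod_eq_zero_iff.mp hz
      rw [_root_.div_eq_zero_iff] at hk0
      rcases hk0 with h | h
      · exact ⟨ρ k, hval k, h⟩
      · exact absurd h (hQroot _ (hval k))
    · rintro ⟨β, hβ, hpβ⟩
      obtain ⟨k, hk⟩ := hsurjρ β hβ
      have hz : ψ U = 0 := by
        rw [hUim]
        apply Finset.prod_eq_zero (Finset.mem_univ k)
        rw [hk, hpβ, zero_div]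
      exact hψinj (by rw [hz, map_zero])


end
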